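/- Let α be irrational and N ≥ 2. Let first(N) be the unique f with 0 < f < N minimizing {f·α} among 0 < m < N, and last(N) the unique l with 0 < l < N maximizing {l·α}. Then N ≤ first(N) + last(N). -/

import Mathlib

lemma fract_pos_of_irrational {x : ℝ} (h : Irrational x) : 0 < Int.fract x := by
  rcases lt_or_eq_of_le (Int.fract_nonneg x) with h' | h'
  · exact h'
  · exact absurd ⟨(⌊x⌋ : ℚ), by push_cast; linarith [Int.self_sub_fract x]⟩ h

theorem N_le_first_add_last (α : ℝ) (hα : Irrational α) (N : ℕ) (hN : 2 ≤ N)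
    (f l : ℕ) (hf0 : 0 < f) (hfN : f < N)
    (hf : ∀ m : ℕ, 0 < m → m < N → Int.fract (f * α) ≤ Int.fract (m * α))
    (hl0 : 0 < l) (hlN : l < N)
    (hl : ∀ m : ℕ, 0 < m → m < N → Int.fract (m * α) ≤ Int.fract (l * α)) :
    N ≤ f + l := by
  by_contra hlt
  push_neg at hlt
  set m := f + l with hm
  have hm0 : 0 < m := Nat.add_pos_left hf0 l
  have hirr : ∀ k : ℕ, 0 < k → Irrational (k * α) := fun k hk => hα.natCast_mul hk.ne'
  have hfpos : 0 < Int.fract (f * α) := fract_pos_of_irrational (hirr f hf0)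
  have hlpos : 0 < Int.fract (l * α) := fract_pos_of_irrational (hirr l hl0)
  have hmpos : 0 < Int.fract (m * α) := fract_pos_of_irrational (hirr m hm0)
  have hcast : (m : ℝ) * α = (f : ℝ) * α + (l : ℝ) * α := by push_cast [hm]; ring
  have key : Int.fract (m * α) = Int.fract (Int.fract (f * α) + Int.fract (l * α)) := by
    rw [hcast, show (f : ℝ) * α + (l : ℝ) * α
        = (Int.fract (f * α) + Int.fract (l * α)) + ((⌊(f : ℝ) * α⌋ + ⌊(l : ℝ) * α⌋ : ℤ) : ℝ) by
      push_cast; unfold Int.fract; push_cast; ring, Int.fract_add_intCast]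
  rcases lt_or_ge (Int.fract (f * α) + Int.fract (l * α)) 1 with hs | hs
  · have : Int.fract (m * α) = Int.fract (f * α) + Int.fract (l * α) := by
      rw [key, Int.fract_eq_self.mpr ⟨by positivity, hs⟩]
    have := hl m hm0 hlt
    linarith
  · have : Int.fract (m * α) = Int.fract (f * α) + Int.fract (l * α) - 1 := by
      rw [key]
      have h2 : Int.fract (f * α) + Int.fract (l * α) < 2 :=
        add_lt_add (Int.fract_lt_one _) (Int.fract_lt_one _)
      |>.trans_eq one_add_one_eq_two
      rw [show Int.fract (f * α) + Int.fract (l * α)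
          = (Int.fract (f * α) + Int.fract (l * α) - 1) + 1 by ring,
        Int.fract_add_one, Int.fract_eq_self.mpr ⟨by linarith, by linarith⟩]
      ring
    have := hf m hm0 hlt
    have hlo := Int.fract_lt_one ((l : ℝ) * α)
    linarith
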